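/- Let μ₀, μ₁, μ₀′, μ₁′ ∈ ℝ with μ₀ ≤ min(μ₁, μ₀′, μ₁′) and μ₀′ ≤ μ₁′, and let σ > 0. If max(|μ₀−μ₀′|, |μ₁−μ₁′|) ≥ 2σ, then ‖f_{μ₀,μ₁} − f_{μ₀′,μ₁′}‖_TV ≥ 1/2 − √(9/(8πe)), and in particular ‖f_{μ₀,μ₁} − f_{μ₀′,μ₁′}‖_TV ≥ 0.137. -/

import Mathlib

open MeasureTheory ProbabilityTheory Real
open scoped ENNReal NNReal

section TVAux
open Set

private lemma my_std_tail : (gaussianReal 0 1 (Iic (-1))).toReal ≤ Real.exp (-(1/2)) / Real.sqrt (2*π) := by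
  have h1 : (1 : ℝ≥0) ≠ 0 := one_ne_zero
  rw [gaussianReal_apply_eq_integral 0 h1]
  rw [ENNReal.toReal_ofReal
    (integral_nonneg fun x => gaussianPDFReal_nonneg _ _ _)]
  set G : ℝ → ℝ := fun x => (Real.sqrt (2*π))⁻¹ * Real.exp (-(1/2) * x^2) with hG
  set g : ℝ → ℝ := fun x => (Real.sqrt (2*π))⁻¹ * (-(x * Real.exp (-(1/2) * x^2))) with hg
  have hderiv : ∀ x : ℝ, HasDerivAt G (g x) x := by
    intro x
    have h1 : HasDerivAt (fun x : ℝ => -(1/2) * x^2) (-(1/2) * (2*x)) x := by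
      simpa using ((hasDerivAt_pow 2 x).const_mul (-(1/2:ℝ)))
    have h2 := (h1.exp).const_mul (Real.sqrt (2*π))⁻¹
    refine h2.congr_deriv ?_
    show _ = (Real.sqrt (2*π))⁻¹ * (-(x * Real.exp (-(1/2) * x^2)))
    ring
  have hint : IntegrableOn g (Iic (-1)) := by
    have : Integrable (fun x : ℝ => x * Real.exp (-(1/2) * x^2)) := by
      have := integrable_mul_exp_neg_mul_sq (b := 1/2) (by norm_num)
      simpa [neg_mul] using this
    exact ((this.neg.const_mul _).restrict)
  have htend : Filter.Tendsto G Filter.atBot (nhds 0) := by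
    rw [hG]
    have : Filter.Tendsto (fun x : ℝ => Real.exp (-(1/2) * x^2)) Filter.atBot (nhds 0) := by
      apply Real.tendsto_exp_atBot.comp
      have hn := Filter.tendsto_neg_atBot_atTop (G := ℝ)
      have h : Filter.Tendsto (fun x : ℝ => x^2) Filter.atBot Filter.atTop :=
        (hn.atTop_mul_atTop₀ hn).congr (fun x => by ring)
      have h2 : Filter.Tendsto (fun x : ℝ => (1/2) * x^2) Filter.atBot Filter.atTop :=
        h.const_mul_atTop (by norm_num)
      have h3 : Filter.Tendsto (fun x : ℝ => -((1/2) * x^2)) Filter.atBot Filter.atBot :=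
        Filter.tendsto_neg_atBot_iff.mpr h2
      simpa [neg_mul] using h3
    simpa using this.const_mul (Real.sqrt (2*π))⁻¹
  have key : ∫ x in Iic (-1:ℝ), g x = G (-1) - 0 :=
    integral_Iic_of_hasDerivAt_of_tendsto' (fun x _ => hderiv x) hint htend
  have hle : ∫ x in Iic (-1:ℝ), gaussianPDFReal 0 1 x ≤ ∫ x in Iic (-1:ℝ), g x := by
    apply setIntegral_mono_on ((integrable_gaussianPDFReal 0 1).restrict) hint measurableSet_Iic
    intro x hx
    simp only [mem_Iic] at hx
    rw [gaussianPDFReal, hg]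
    simp only [NNReal.coe_one, mul_one, sub_zero]
    have hx1 : (1:ℝ) ≤ -x := by linarith
    have hexp : Real.exp (-x^2 / 2) = Real.exp (-(1/2) * x^2) := by ring_nf
    rw [hexp]
    have h0 : (0:ℝ) < Real.exp (-(1/2) * x^2) := Real.exp_pos _
    have : Real.exp (-(1/2) * x^2) ≤ -x * Real.exp (-(1/2) * x^2) := by nlinarith
    have hs : (0:ℝ) < (Real.sqrt (2*π))⁻¹ := by positivity
    nlinarith
  calc ∫ x in Iic (-1:ℝ), gaussianPDFReal 0 1 x ≤ ∫ x in Iic (-1:ℝ), g x := hle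
    _ = G (-1) - 0 := key
    _ = Real.exp (-(1/2)) / Real.sqrt (2*π) := by
        rw [hG]; simp; rw [div_eq_inv_mul]; ring_nf

private lemma my_gauss_Iic_shift (μ t : ℝ) (v : ℝ≥0) :
    gaussianReal μ v (Iic t) = gaussianReal 0 v (Iic (t - μ)) := by
  have h := gaussianReal_map_add_const (μ := 0) (v := v) μ
  rw [zero_add] at h
  rw [← h, Measure.map_apply (measurable_add_const μ) measurableSet_Iic]
  congr 1
  ext x
  simp only [mem_preimage, mem_Iic]
  constructor <;> intro <;> linarith

private lemma my_gauss_Ici_shift (μ t : ℝ) (v : ℝ≥0) :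
    gaussianReal μ v (Ici t) = gaussianReal 0 v (Ici (t - μ)) := by
  have h := gaussianReal_map_add_const (μ := 0) (v := v) μ
  rw [zero_add] at h
  rw [← h, Measure.map_apply (measurable_add_const μ) measurableSet_Ici]
  congr 1
  ext x
  simp only [mem_preimage, mem_Ici]
  constructor <;> intro <;> linarith

private lemma my_gauss_mono (μ μ' t : ℝ) (v : ℝ≥0) (h : μ ≤ μ') :
    gaussianReal μ' v (Iic t) ≤ gaussianReal μ v (Iic t) := by
  rw [my_gauss_Iic_shift μ' t v, my_gauss_Iic_shift μ t v]
  apply measure_mono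
  exact Iic_subset_Iic.mpr (sub_le_sub_left h t)

private lemma my_gauss_scale (σ : ℝ) (hσ : 0 < σ) :
    gaussianReal 0 (NNReal.mk (σ^2) (sq_nonneg σ)) (Iic (-σ)) = gaussianReal 0 1 (Iic (-1)) := by
  have h := gaussianReal_map_const_mul (μ := 0) (v := (NNReal.mk (σ^2) (sq_nonneg σ))) σ⁻¹
  rw [mul_zero] at h
  have hv : (NNReal.mk ((σ⁻¹)^2) (sq_nonneg _)) * (NNReal.mk (σ^2) (sq_nonneg σ)) = 1 := by
    ext
    push_cast
    field_simp
  rw [hv] at h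
  rw [← h, Measure.map_apply (measurable_const_mul _) measurableSet_Iic]
  congr 1
  ext x
  simp only [mem_preimage, mem_Iic]
  constructor
  · intro hx
    have h2 := mul_le_mul_of_nonneg_left hx (inv_nonneg.mpr hσ.le)
    rw [mul_neg, inv_mul_cancel₀ hσ.ne'] at h2
    linarith
  · intro hx
    have h2 := mul_le_mul_of_nonneg_left hx hσ.le
    rw [← mul_assoc, mul_inv_cancel₀ hσ.ne', one_mul] at h2
    linarith

private lemma my_gauss_sym (σ : ℝ) (v : ℝ≥0) :
    gaussianReal 0 v (Ici σ) = gaussianReal 0 v (Iic (-σ)) := by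
  have h := gaussianReal_map_const_mul (μ := 0) (v := v) (-1)
  rw [mul_zero] at h
  have hv : (NNReal.mk ((-1:ℝ)^2) (sq_nonneg (-1:ℝ))) = 1 := by
    ext; norm_num
  rw [hv, one_mul] at h
  conv_lhs => rw [← h]
  rw [Measure.map_apply (measurable_const_mul _) measurableSet_Ici]
  congr 1
  ext x
  simp only [mem_preimage, mem_Ici, mem_Iic]
  constructor <;> intro <;> linarith

private lemma my_const_eq : Real.sqrt (9 / (8 * π * Real.exp 1)) =
    3/2 * (Real.exp (-(1/2)) / Real.sqrt (2*π)) := by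
  have hπ : (0:ℝ) < π := Real.pi_pos
  have he : (0:ℝ) < Real.exp 1 := Real.exp_pos 1
  have hs : (0:ℝ) < Real.sqrt (2*π) := Real.sqrt_pos.mpr (by positivity)
  have hsq : (3/2 * (Real.exp (-(1/2)) / Real.sqrt (2*π)))^2 = 9 / (8 * π * Real.exp 1) := by
    have h1 : Real.exp (-(1/2:ℝ)) ^ 2 = (Real.exp 1)⁻¹ := by
      rw [← Real.exp_nat_mul]
      norm_num
      rw [Real.exp_neg]
    have h2 : Real.sqrt (2*π) ^ 2 = 2*π := Real.sq_sqrt (by positivity)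
    rw [mul_pow, div_pow, div_pow, h1, h2]
    rw [eq_div_iff (by positivity)]
    field_simp
    ring
  rw [← hsq, Real.sqrt_sq (by positivity)]

private lemma my_const_num : Real.sqrt (9 / (8 * π * Real.exp 1)) ≤ 0.363 := by
  have hπ : (3.141592:ℝ) < π := Real.pi_gt_d6
  have he : (2.7182818283:ℝ) < Real.exp 1 := Real.exp_one_gt_d9
  have h : (9 / (8 * π * Real.exp 1) : ℝ) ≤ 0.363^2 := by
    rw [div_le_iff₀ (by positivity)]
    nlinarith
  calc Real.sqrt (9 / (8 * π * Real.exp 1)) ≤ Real.sqrt (0.363^2) := Real.sqrt_le_sqrt h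
    _ = 0.363 := Real.sqrt_sq (by norm_num)

end TVAux

/-- Total variation distance: `sup_A (f(A) - f'(A))` over measurable sets `A`. -/
noncomputable def tvDist {Ω : Type*} [MeasurableSpace Ω] (f f' : Measure Ω) : ℝ :=
  ⨆ A : {A : Set Ω // MeasurableSet A}, ((f A.1).toReal - (f' A.1).toReal)

/-- One-dimensional two-component Gaussian mixture with component variance `v`. -/
noncomputable def mix1v (m₀ m₁ : ℝ) (v : ℝ≥0) : Measure ℝ :=
  (1/2 : ℝ≥0∞) • gaussianReal m₀ v + (1/2 : ℝ≥0∞) • gaussianReal m₁ v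

/-- One-dimensional mixture `½·N(μ₀,σ²) + ½·N(μ₁,σ²)`. -/
noncomputable def mix1d (μ₀ μ₁ σ : ℝ) : Measure ℝ :=
  mix1v μ₀ μ₁ ⟨σ^2, sq_nonneg σ⟩

section TVAux2
open Set

private lemma my_mix1d_eq (μ₀ μ₁ σ : ℝ) :
    mix1d μ₀ μ₁ σ = mix1v μ₀ μ₁ (NNReal.mk (σ^2) (sq_nonneg σ)) := rfl

private lemma my_mix1d_apply (μ₀ μ₁ σ : ℝ) (s : Set ℝ) :
    (mix1d μ₀ μ₁ σ s).toReal =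
      ((gaussianReal μ₀ (NNReal.mk (σ^2) (sq_nonneg σ)) s).toReal
        + (gaussianReal μ₁ (NNReal.mk (σ^2) (sq_nonneg σ)) s).toReal) / 2 := by
  rw [my_mix1d_eq, mix1v, Measure.add_apply, Measure.smul_apply, Measure.smul_apply,
    smul_eq_mul, smul_eq_mul]
  rw [ENNReal.toReal_add (ENNReal.mul_ne_top (by norm_num) (measure_ne_top _ _))
    (ENNReal.mul_ne_top (by norm_num) (measure_ne_top _ _)), ENNReal.toReal_mul,
    ENNReal.toReal_mul]
  norm_num
  ring

instance my_mix1d_prob (μ₀ μ₁ σ : ℝ) : IsProbabilityMeasure (mix1d μ₀ μ₁ σ) := by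
  constructor
  rw [my_mix1d_eq, mix1v, Measure.add_apply, Measure.smul_apply, Measure.smul_apply,
    smul_eq_mul, smul_eq_mul, measure_univ, measure_univ, mul_one]
  rw [ENNReal.div_add_div_same]
  rw [one_add_one_eq_two]
  exact ENNReal.div_self (two_ne_zero) (ENNReal.ofNat_ne_top)

private lemma my_tv_ge {f f' : Measure ℝ} [IsProbabilityMeasure f] [IsProbabilityMeasure f']
    {A : Set ℝ} (hA : MeasurableSet A) :
    (f A).toReal - (f' A).toReal ≤ tvDist f f' := by
  have hbdd : BddAbove (Set.range fun B : {B : Set ℝ // MeasurableSet B} =>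
      ((f B.1).toReal - (f' B.1).toReal)) := by
    refine ⟨1, ?_⟩
    rintro x ⟨B, rfl⟩
    have h1 : (f B.1).toReal ≤ 1 := by
      have := prob_le_one (μ := f) (s := B.1)
      simpa using ENNReal.toReal_mono (by norm_num) this
    have h2 : (0:ℝ) ≤ (f' B.1).toReal := ENNReal.toReal_nonneg
    simp only
    linarith
  exact le_ciSup hbdd ⟨A, hA⟩

private lemma my_tv_ge' {f f' : Measure ℝ} [IsProbabilityMeasure f] [IsProbabilityMeasure f']
    {A : Set ℝ} (hA : MeasurableSet A) :
    (f' A).toReal - (f A).toReal ≤ tvDist f f' := by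
  have h := my_tv_ge (f := f) (f' := f') hA.compl
  have h1 : (f Aᶜ).toReal = 1 - (f A).toReal := by
    rw [prob_compl_eq_one_sub hA, ENNReal.toReal_sub_of_le prob_le_one (by norm_num)]
    norm_num
  have h2 : (f' Aᶜ).toReal = 1 - (f' A).toReal := by
    rw [prob_compl_eq_one_sub hA, ENNReal.toReal_sub_of_le prob_le_one (by norm_num)]
    norm_num
  rw [h1, h2] at h
  linarith

private lemma my_gauss_le_one (m : ℝ) (v : ℝ≥0) (s : Set ℝ) :
    (gaussianReal m v s).toReal ≤ 1 := by
  have := prob_le_one (μ := gaussianReal m v) (s := s)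
  simpa using ENNReal.toReal_mono (by norm_num) this

private lemma my_gauss_mono_real (μ μ' t : ℝ) (v : ℝ≥0) (h : μ ≤ μ') :
    (gaussianReal μ' v (Iic t)).toReal ≤ (gaussianReal μ v (Iic t)).toReal :=
  ENNReal.toReal_mono (measure_ne_top _ _) (my_gauss_mono μ μ' t v h)

/-- upper tail bound: `P(N(μ,σ²) ≤ μ - σ) ≤ exp(-1/2)/√(2π)`. -/
private lemma my_P_hi (μ σ : ℝ) (hσ : 0 < σ) :
    (gaussianReal μ (NNReal.mk (σ^2) (sq_nonneg σ)) (Iic (μ - σ))).toReal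
      ≤ Real.exp (-(1/2)) / Real.sqrt (2*π) := by
  rw [my_gauss_Iic_shift, show μ - σ - μ = -σ by ring, my_gauss_scale σ hσ]
  exact my_std_tail

/-- lower bound: `P(N(μ,σ²) ≤ μ + σ) ≥ 1 - exp(-1/2)/√(2π)`. -/
private lemma my_P_lo (μ σ : ℝ) (hσ : 0 < σ) :
    1 - Real.exp (-(1/2)) / Real.sqrt (2*π)
      ≤ (gaussianReal μ (NNReal.mk (σ^2) (sq_nonneg σ)) (Iic (μ + σ))).toReal := by
  set v : ℝ≥0 := (NNReal.mk (σ^2) (sq_nonneg σ)) with hv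
  have hIci : (gaussianReal μ v (Ici (μ + σ))).toReal
      ≤ Real.exp (-(1/2)) / Real.sqrt (2*π) := by
    rw [my_gauss_Ici_shift, show μ + σ - μ = σ by ring, my_gauss_sym σ v, hv,
      my_gauss_scale σ hσ]
    exact my_std_tail
  have hcompl : (gaussianReal μ v (Iic (μ + σ))).toReal
      = 1 - (gaussianReal μ v (Ioi (μ + σ))).toReal := by
    have h := prob_compl_eq_one_sub (μ := gaussianReal μ v) (measurableSet_Ioi (a := μ + σ))
    rw [compl_Ioi] at h
    rw [h, ENNReal.toReal_sub_of_le prob_le_one (by norm_num)]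
    norm_num
  have hIoi : (gaussianReal μ v (Ioi (μ + σ))).toReal
      ≤ (gaussianReal μ v (Ici (μ + σ))).toReal :=
    ENNReal.toReal_mono (measure_ne_top _ _) (measure_mono Ioi_subset_Ici_self)
  rw [hcompl]
  linarith

end TVAux2

open Set in
theorem stmt_8 (μ₀ μ₁ μ₀' μ₁' σ : ℝ) (hσ : 0 < σ)
    (h0 : μ₀ ≤ min μ₁ (min μ₀' μ₁')) (h1 : μ₀' ≤ μ₁')
    (hgap : max |μ₀ - μ₀'| |μ₁ - μ₁'| ≥ 2 * σ) :
    tvDist (mix1d μ₀ μ₁ σ) (mix1d μ₀' μ₁' σ) ≥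
        1/2 - Real.sqrt (9 / (8 * π * Real.exp 1)) ∧
    tvDist (mix1d μ₀ μ₁ σ) (mix1d μ₀' μ₁' σ) ≥ 0.137 := by
  set c : ℝ := Real.exp (-(1/2)) / Real.sqrt (2*π) with hc
  have hc0 : 0 ≤ c := by positivity
  set v : ℝ≥0 := (NNReal.mk (σ^2) (sq_nonneg σ)) with hv
  obtain ⟨h01, h00', h01'⟩ : μ₀ ≤ μ₁ ∧ μ₀ ≤ μ₀' ∧ μ₀ ≤ μ₁' := by
    rw [le_min_iff, le_min_iff] at h0
    exact ⟨h0.1, h0.2.1, h0.2.2⟩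
  have key : 1/2 - 3/2*c ≤ tvDist (mix1d μ₀ μ₁ σ) (mix1d μ₀' μ₁' σ) := by
    rcases le_max_iff.mp hgap with hA | hB
    · -- |μ₀ - μ₀'| ≥ 2σ, so μ₀' ≥ μ₀ + 2σ
      have hA' : μ₀ + 2*σ ≤ μ₀' := by
        rw [abs_sub_comm, abs_of_nonneg (by linarith)] at hA
        linarith
      have hA'' : μ₀ + 2*σ ≤ μ₁' := le_trans hA' h1
      have hf : (1 - c)/2 ≤ (mix1d μ₀ μ₁ σ (Iic (μ₀ + σ))).toReal := by
        rw [my_mix1d_apply]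
        have h1' := my_P_lo μ₀ σ hσ
        have h2' : (0:ℝ) ≤ (gaussianReal μ₁ v (Iic (μ₀ + σ))).toReal := ENNReal.toReal_nonneg
        rw [← hc] at h1'
        linarith
      have hf' : (mix1d μ₀' μ₁' σ (Iic (μ₀ + σ))).toReal ≤ c := by
        rw [my_mix1d_apply]
        have hb0 : (gaussianReal μ₀' v (Iic (μ₀ + σ))).toReal
            ≤ (gaussianReal (μ₀ + 2*σ) v (Iic (μ₀ + σ))).toReal :=
          my_gauss_mono_real _ _ _ _ hA'
        have hb1 : (gaussianReal μ₁' v (Iic (μ₀ + σ))).toReal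
            ≤ (gaussianReal (μ₀ + 2*σ) v (Iic (μ₀ + σ))).toReal :=
          my_gauss_mono_real _ _ _ _ hA''
        have hbb : (gaussianReal (μ₀ + 2*σ) v (Iic (μ₀ + σ))).toReal ≤ c := by
          have := my_P_hi (μ₀ + 2*σ) σ hσ
          rw [show μ₀ + 2*σ - σ = μ₀ + σ by ring] at this
          rw [hc]
          exact this
        linarith
      have := my_tv_ge (f := mix1d μ₀ μ₁ σ) (f' := mix1d μ₀' μ₁' σ)
        (measurableSet_Iic (a := μ₀ + σ))
      linarith
    · rcases le_abs.mp hB with hB1 | hB2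
      · -- μ₁ - μ₁' ≥ 2σ : use reverse direction at t = μ₁ - σ
        have hB1' : μ₁' ≤ μ₁ - 2*σ := by linarith
        have hB1'' : μ₀' ≤ μ₁ - 2*σ := le_trans h1 hB1'
        have hf' : 1 - c ≤ (mix1d μ₀' μ₁' σ (Iic (μ₁ - σ))).toReal := by
          rw [my_mix1d_apply]
          have hlo := my_P_lo (μ₁ - 2*σ) σ hσ
          rw [show μ₁ - 2*σ + σ = μ₁ - σ by ring, ← hc] at hlo
          have hb0 : (gaussianReal (μ₁ - 2*σ) v (Iic (μ₁ - σ))).toReal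
              ≤ (gaussianReal μ₀' v (Iic (μ₁ - σ))).toReal :=
            my_gauss_mono_real _ _ _ _ hB1''
          have hb1 : (gaussianReal (μ₁ - 2*σ) v (Iic (μ₁ - σ))).toReal
              ≤ (gaussianReal μ₁' v (Iic (μ₁ - σ))).toReal :=
            my_gauss_mono_real _ _ _ _ hB1'
          linarith
        have hf : (mix1d μ₀ μ₁ σ (Iic (μ₁ - σ))).toReal ≤ (1 + c)/2 := by
          rw [my_mix1d_apply]
          have hhi := my_P_hi μ₁ σ hσ
          rw [← hc] at hhi
          have h1' : (gaussianReal μ₀ v (Iic (μ₁ - σ))).toReal ≤ 1 := my_gauss_le_one _ _ _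
          linarith
        have := my_tv_ge' (f := mix1d μ₀ μ₁ σ) (f' := mix1d μ₀' μ₁' σ)
          (measurableSet_Iic (a := μ₁ - σ))
        linarith
      · -- μ₁' - μ₁ ≥ 2σ : t = μ₁ + σ
        have hB2' : μ₁ + 2*σ ≤ μ₁' := by linarith
        have hf : 1 - c ≤ (mix1d μ₀ μ₁ σ (Iic (μ₁ + σ))).toReal := by
          rw [my_mix1d_apply]
          have hlo := my_P_lo μ₁ σ hσ
          rw [← hc] at hlo
          have hb0 : (gaussianReal μ₁ v (Iic (μ₁ + σ))).toReal
              ≤ (gaussianReal μ₀ v (Iic (μ₁ + σ))).toReal :=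
            my_gauss_mono_real _ _ _ _ h01
          linarith
        have hf' : (mix1d μ₀' μ₁' σ (Iic (μ₁ + σ))).toReal ≤ (1 + c)/2 := by
          rw [my_mix1d_apply]
          have hb1 : (gaussianReal μ₁' v (Iic (μ₁ + σ))).toReal
              ≤ (gaussianReal (μ₁ + 2*σ) v (Iic (μ₁ + σ))).toReal :=
            my_gauss_mono_real _ _ _ _ hB2'
          have hbb : (gaussianReal (μ₁ + 2*σ) v (Iic (μ₁ + σ))).toReal ≤ c := by
            have := my_P_hi (μ₁ + 2*σ) σ hσ
            rw [show μ₁ + 2*σ - σ = μ₁ + σ by ring, ← hc] at this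
            exact this
          have h1' : (gaussianReal μ₀' v (Iic (μ₁ + σ))).toReal ≤ 1 := my_gauss_le_one _ _ _
          linarith
        have := my_tv_ge (f := mix1d μ₀ μ₁ σ) (f' := mix1d μ₀' μ₁' σ)
          (measurableSet_Iic (a := μ₁ + σ))
        linarith
  have heq : Real.sqrt (9 / (8 * π * Real.exp 1)) = 3/2 * c := by
    rw [hc]; exact my_const_eq
  constructor
  · rw [ge_iff_le, heq]
    linarith
  · have hnum := my_const_num
    rw [heq] at hnum
    have : (0.137:ℝ) ≤ 1/2 - 3/2*c := by
      norm_num at hnum ⊢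
      linarith
    linarith
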